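/- Let ν > 2 and set κ = Γ((ν+1)/2)(ν − 1) / (2√π Γ(ν/2)). Then for every real t (of either sign), both 1 / (1 − F_ν(t)) ≤ 2 + (t² + ν)^{ν/2} / κ and 1 / F_ν(t) ≤ 2 + (t² + ν)^{ν/2} / κ. -/

import Mathlib

open MeasureTheory

/-- The CDF of the Student's t distribution with `ν` degrees of freedom. -/
noncomputable def tCDF (ν t : ℝ) : ℝ :=
  ∫ u in Set.Iic t,
    (Real.Gamma ((ν + 1) / 2) / (Real.sqrt (ν * Real.pi) * Real.Gamma (ν / 2))) *
      (1 + u ^ 2 / ν) ^ (-((ν + 1) / 2))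

open MeasureTheory Set Real Filter

noncomputable def tPdf (ν : ℝ) (u : ℝ) : ℝ := (1 + u ^ 2 / ν) ^ (-((ν + 1) / 2))

lemma tPdf_base_pos {ν : ℝ} (hν : 0 < ν) (u : ℝ) : 0 < 1 + u ^ 2 / ν := by positivity

lemma tPdf_pos {ν : ℝ} (hν : 0 < ν) (u : ℝ) : 0 < tPdf ν u :=
  Real.rpow_pos_of_pos (tPdf_base_pos hν u) _

lemma tPdf_continuous {ν : ℝ} (hν : 0 < ν) : Continuous (tPdf ν) := by
  apply Continuous.rpow_const
  · continuity
  · intro u; exact Or.inl (ne_of_gt (tPdf_base_pos hν u))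

lemma tPdf_even {ν : ℝ} (u : ℝ) : tPdf ν (-u) = tPdf ν u := by
  simp [tPdf, neg_sq]

lemma tPdf_integrable {ν : ℝ} (hν1 : 1 ≤ ν) : Integrable (tPdf ν) := by
  have hν : 0 < ν := by linarith
  have hz : -((ν + 1) / 2) ≤ 0 := by linarith
  have hbound : Integrable (fun u : ℝ => ν ^ ((ν+1)/2) * (1 + ‖u‖ ^ 2) ^ (-(ν+1)/2)) := by
    refine Integrable.const_mul ?_ _
    apply integrable_rpow_neg_one_add_norm_sq (E := ℝ)
    simp only [Module.finrank_self, Nat.cast_one]; linarith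
  refine hbound.mono' ((tPdf_continuous hν).aestronglyMeasurable) ?_
  filter_upwards with u
  rw [Real.norm_of_nonneg (tPdf_pos hν u).le]
  have h3 : (0:ℝ) < (1 + u ^ 2) / ν := by positivity
  have h2 : (1 + u ^ 2) / ν ≤ 1 + u ^ 2 / ν := by
    rw [div_le_iff₀ hν, add_mul, div_mul_cancel₀ _ hν.ne']; nlinarith [sq_nonneg u]
  calc tPdf ν u ≤ ((1 + u ^ 2) / ν) ^ (-((ν + 1) / 2)) :=
        Real.rpow_le_rpow_of_nonpos h3 h2 hz
    _ = ν ^ ((ν+1)/2) * (1 + ‖u‖ ^ 2) ^ (-(ν+1)/2) := by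
        rw [Real.div_rpow (by positivity) hν.le, Real.rpow_neg hν.le, div_eq_mul_inv, inv_inv, mul_comm]
        norm_num [Real.norm_eq_abs, sq_abs, neg_div]
        left; ring_nf

lemma beta_eval {a b : ℝ} (ha : 0 < a) (hb : 0 < b) :
    ∫ t in Ioo (0:ℝ) 1, t ^ (a-1) * (1-t) ^ (b-1)
      = Real.Gamma a * Real.Gamma b / Real.Gamma (a+b) := by
  have hab : (0:ℝ) < Real.Gamma (a+b) := Real.Gamma_pos_of_pos (by linarith)
  have hbeta := Complex.Gamma_mul_Gamma_eq_betaIntegral (s := (a:ℂ)) (t := (b:ℂ))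
      (by simpa using ha) (by simpa using hb)
  have hBI : Complex.betaIntegral a b
      = ((∫ t in Ioo (0:ℝ) 1, t ^ (a-1) * (1-t) ^ (b-1) : ℝ) : ℂ) := by
    rw [Complex.betaIntegral, intervalIntegral.integral_of_le zero_le_one,
      integral_Ioc_eq_integral_Ioo,
      show ((∫ t in Ioo (0:ℝ) 1, t ^ (a-1) * (1-t) ^ (b-1) : ℝ) : ℂ)
        = ∫ t in Ioo (0:ℝ) 1, ((t ^ (a-1) * (1-t) ^ (b-1) : ℝ) : ℂ)
        from (integral_ofReal (𝕜 := ℂ)).symm]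
    refine setIntegral_congr_fun measurableSet_Ioo (fun x hx => ?_)
    have h1 : (0:ℝ) ≤ x := hx.1.le
    have h2 : (0:ℝ) ≤ 1 - x := by linarith [hx.2]
    push_cast [Complex.ofReal_cpow h1, Complex.ofReal_cpow h2]
    ring
  rw [hBI, show ((a:ℂ) + (b:ℂ)) = ((a + b : ℝ) : ℂ) by push_cast; ring,
    Complex.Gamma_ofReal, Complex.Gamma_ofReal, Complex.Gamma_ofReal,
    ← Complex.ofReal_mul, ← Complex.ofReal_mul] at hbeta
  have hre := Complex.ofReal_injective hbeta
  rw [eq_div_iff hab.ne']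
  linarith [hre]

lemma subst_lemma {ν : ℝ} (hν : 0 < ν) :
    ∫ u in Ioi (0:ℝ), tPdf ν u
      = Real.sqrt ν / 2 * ∫ t in Ioo (0:ℝ) 1, t ^ (ν/2-1) * (1-t) ^ ((1:ℝ)/2-1) := by
  set φ : ℝ → ℝ := fun t => Real.sqrt (ν*(1-t)/t) with hφ
  set φ' : ℝ → ℝ := fun t => (-ν/t^2) / (2*Real.sqrt (ν*(1-t)/t)) with hφ'
  have hA : ∀ t ∈ Ioo (0:ℝ) 1, 0 < ν*(1-t)/t := by
    intro t ht
    have := ht.1; have := ht.2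
    have h1 : (0:ℝ) < 1 - t := by linarith
    positivity
  have hderiv : ∀ t ∈ Ioo (0:ℝ) 1, HasDerivWithinAt φ (φ' t) (Ioo (0:ℝ) 1) t := by
    intro t ht
    have ht0 : (0:ℝ) < t := ht.1
    have hd0 : HasDerivAt (fun x : ℝ => ν*(1-x)/x)
        ((ν * (0-1) * t - ν*(1-t) * 1)/t^2) t := by
      exact (((hasDerivAt_const t (1:ℝ)).sub (hasDerivAt_id t)).const_mul ν).div
        (hasDerivAt_id t) ht0.ne'
    have hd : HasDerivAt (fun x : ℝ => ν*(1-x)/x) (-ν/t^2) t := by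
      convert hd0 using 1; field_simp; ring
    exact ((hd.sqrt (hA t ht).ne').hasDerivWithinAt)
  have hinj : InjOn φ (Ioo (0:ℝ) 1) := by
    intro t1 h1 t2 h2 heq
    have h := (Real.sqrt_inj (hA t1 h1).le (hA t2 h2).le).mp heq
    rw [div_eq_div_iff h1.1.ne' h2.1.ne'] at h
    have h2' : ν * (t2 - t1) = 0 := by linear_combination h
    have := hν.ne'
    nlinarith [h2']
  have himg : φ '' Ioo (0:ℝ) 1 = Ioi (0:ℝ) := by
    ext y
    constructor
    · rintro ⟨t, ht, rfl⟩
      exact mem_Ioi.mpr (Real.sqrt_pos.mpr (hA t ht))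
    · intro hy
      have hy0 : (0:ℝ) < y := hy
      have hden : (0:ℝ) < ν + y^2 := by positivity
      refine ⟨ν/(ν+y^2), ⟨by positivity, ?_⟩, ?_⟩
      · rw [div_lt_one hden]; nlinarith
      · have harg : ν*(1 - ν/(ν+y^2))/(ν/(ν+y^2)) = y^2 := by
          field_simp
          ring
        simp only [hφ, harg]
        exact Real.sqrt_sq hy0.le
  have key : ∀ t ∈ Ioo (0:ℝ) 1,
      |φ' t| • tPdf ν (φ t) = Real.sqrt ν / 2 * (t ^ (ν/2-1) * (1-t) ^ ((1:ℝ)/2-1)) := by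
    intro t ht
    have ht0 : (0:ℝ) < t := ht.1
    have h1t : (0:ℝ) < 1 - t := by linarith [ht.2]
    have hAt : 0 < ν*(1-t)/t := hA t ht
    have hsq : (φ t)^2 = ν*(1-t)/t := Real.sq_sqrt hAt.le
    have hpdf : tPdf ν (φ t) = t ^ ((ν+1)/2) := by
      rw [tPdf, hsq]
      have : 1 + ν*(1-t)/t/ν = 1/t := by field_simp; ring
      rw [this, one_div, Real.inv_rpow ht0.le, ← Real.rpow_neg ht0.le, neg_neg]
    have habs : |φ' t| = (ν/t^2) / (2*Real.sqrt (ν*(1-t)/t)) := by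
      rw [hφ']
      rw [abs_div, abs_of_pos (by positivity : (0:ℝ) < 2*Real.sqrt (ν*(1-t)/t)),
        abs_div, abs_of_neg (by linarith : -ν < 0), abs_of_pos (by positivity : (0:ℝ) < t^2)]
      ring_nf
    rw [smul_eq_mul, habs, hpdf]
    -- now pure rpow/sqrt algebra
    have h2 : (1-t) ^ ((1:ℝ)/2-1) = ((1-t) ^ ((1:ℝ)/2))⁻¹ := by
      rw [show (1:ℝ)/2-1 = -(1/2) by norm_num, Real.rpow_neg h1t.le]
    have h3 : t ^ ((1:ℝ)/2) * t ^ ((ν+1)/2) / t^2 = t ^ (ν/2-1) := by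
      rw [← Real.rpow_natCast t 2, ← Real.rpow_add ht0, ← Real.rpow_sub ht0]
      congr 1
      push_cast; ring
    rw [Real.sqrt_div (by positivity : (0:ℝ) ≤ ν*(1-t)) t, Real.sqrt_mul hν.le, h2, ← h3]
    simp only [Real.sqrt_eq_rpow]
    have hb : (0:ℝ) < t ^ ((1:ℝ)/2) := Real.rpow_pos_of_pos ht0 _
    have hc : (0:ℝ) < (1-t) ^ ((1:ℝ)/2) := Real.rpow_pos_of_pos h1t _
    have ha : (0:ℝ) < ν ^ ((1:ℝ)/2) := Real.rpow_pos_of_pos hν _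
    have hT : (0:ℝ) < t ^ ((ν+1)/2) := Real.rpow_pos_of_pos ht0 _
    have hν2 : ν ^ ((1:ℝ)/2) * ν ^ ((1:ℝ)/2) = ν := by
      rw [← Real.rpow_add hν]; norm_num
    field_simp
    linear_combination (-1:ℝ) * hν2
  rw [← himg, integral_image_eq_integral_abs_deriv_smul measurableSet_Ioo hderiv hinj,
    setIntegral_congr_fun measurableSet_Ioo key, MeasureTheory.integral_const_mul]

lemma symm_lemma {ν : ℝ} (t : ℝ) :
    ∫ u in Iic t, tPdf ν u = ∫ u in Ioi (-t), tPdf ν u := by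
  rw [show ∫ u in Iic t, tPdf ν u = ∫ u in Iic t, tPdf ν (-u) from
    setIntegral_congr_fun measurableSet_Iic (fun u _ => (tPdf_even u).symm),
    integral_comp_neg_Iic]

lemma tail_lemma {ν : ℝ} (hν : 0 < ν) {t : ℝ} (ht : 0 ≤ t)
    (hTInt : IntegrableOn (tPdf ν) (Ioi t)) :
    ν ^ ((ν-1)/2) * (ν + t^2) ^ (-(ν/2)) ≤ ∫ u in Ioi t, tPdf ν u := by
  set C : ℝ := ν ^ ((ν-1)/2) with hC
  have hC0 : 0 < C := Real.rpow_pos_of_pos hν _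
  set g : ℝ → ℝ := fun u => -C * (ν + u^2) ^ (-(ν/2)) with hg
  set g' : ℝ → ℝ := fun u => C * ν * u * (ν + u^2) ^ (-(ν/2) - 1) with hg'
  have hbase : ∀ u : ℝ, (0:ℝ) < ν + u^2 := fun u => by positivity
  have hderiv : ∀ u ∈ Ici t, HasDerivAt g (g' u) u := by
    intro u _
    have h1 : HasDerivAt (fun x : ℝ => ν + x^2) (2*u) u := by
      simpa using ((hasDerivAt_pow 2 u).const_add ν)
    have h2 := (h1.rpow_const (p := -(ν/2)) (Or.inl (hbase u).ne')).const_mul (-C)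
    refine h2.congr_deriv ?_
    simp only [hg']
    ring
  have hnonneg : ∀ u ∈ Ioi t, 0 ≤ g' u := by
    intro u hu
    have hu0 : (0:ℝ) ≤ u := le_trans ht (le_of_lt hu)
    have := (hbase u)
    have : (0:ℝ) ≤ (ν + u^2) ^ (-(ν/2) - 1) := (Real.rpow_pos_of_pos (hbase u) _).le
    positivity
  have htend : Tendsto g atTop (nhds 0) := by
    have h1 : Tendsto (fun u : ℝ => ν + u^2) atTop atTop := by
      apply tendsto_atTop_add_const_left
      simpa using (tendsto_pow_atTop (n := 2) (by norm_num))
    have h2 : Tendsto (fun u : ℝ => (ν + u^2) ^ (-(ν/2))) atTop (nhds 0) :=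
      (tendsto_rpow_neg_atTop (by linarith)).comp h1
    have := h2.const_mul (-C)
    rw [hg]
    simpa [neg_mul] using this
  have hval : ∫ u in Ioi t, g' u = C * (ν + t^2) ^ (-(ν/2)) := by
    rw [integral_Ioi_of_hasDerivAt_of_nonneg' hderiv hnonneg htend]
    simp [hg]
  have hint : IntegrableOn g' (Ioi t) :=
    integrableOn_Ioi_deriv_of_nonneg' hderiv hnonneg htend
  have hptwise : ∀ u ∈ Ioi t, g' u ≤ tPdf ν u := by
    intro u hu
    have hu0 : (0:ℝ) < u ∨ (0:ℝ) ≤ u := Or.inr (le_trans ht hu.le)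
    have hu0' : (0:ℝ) ≤ u := le_trans ht hu.le
    have hb := hbase u
    have hrhs : tPdf ν u = ν ^ ((ν+1)/2) * (ν + u^2) ^ (-((ν+1)/2)) := by
      rw [tPdf, show 1 + u^2/ν = (ν + u^2)/ν by field_simp,
        Real.div_rpow hb.le hν.le, Real.rpow_neg hν.le, div_eq_mul_inv, inv_inv, mul_comm]
    have hCν : C * ν = ν ^ ((ν+1)/2) := by
      rw [hC, ← Real.rpow_add_one hν.ne']
      congr 1; ring
    have hsplit : (ν + u^2) ^ (-(ν/2) - 1) =
        (ν + u^2) ^ (-((ν+1)/2)) * (ν + u^2) ^ (-(1:ℝ)/2) := by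
      rw [← Real.rpow_add hb]
      congr 1; ring
    simp only [hg']
    rw [hrhs, hCν, hsplit]
    have husq : u ≤ (ν + u^2) ^ ((1:ℝ)/2) := by
      rw [← Real.sqrt_eq_rpow, ← Real.sqrt_sq hu0']
      exact Real.sqrt_le_sqrt (by nlinarith [Real.sqrt_sq hu0'])
    have hle1 : u * (ν + u^2) ^ (-(1:ℝ)/2) ≤ 1 := by
      rw [show (-(1:ℝ)/2) = -((1:ℝ)/2) by norm_num, Real.rpow_neg hb.le,
        ← div_eq_mul_inv, div_le_one (Real.rpow_pos_of_pos hb _)]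
      exact husq
    calc ν ^ ((ν+1)/2) * u * ((ν + u^2) ^ (-((ν+1)/2)) * (ν + u^2) ^ (-(1:ℝ)/2))
        = (u * (ν + u^2) ^ (-(1:ℝ)/2)) * (ν ^ ((ν+1)/2) * (ν + u^2) ^ (-((ν+1)/2))) := by ring
      _ ≤ 1 * (ν ^ ((ν+1)/2) * (ν + u^2) ^ (-((ν+1)/2))) := by
          apply mul_le_mul_of_nonneg_right hle1
          positivity
      _ = ν ^ ((ν+1)/2) * (ν + u^2) ^ (-((ν+1)/2)) := by ring
  have hmono := setIntegral_mono_on hint hTInt measurableSet_Ioi hptwise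
  rw [hval] at hmono
  exact hmono

lemma pow_lemma {ν : ℝ} (hν : 2 < ν) : (ν-1)/2 ≤ ν ^ (ν/2 - 1) := by
  have hx : (0:ℝ) < ν/2 - 1 := by linarith
  have hlog2 : (0.6931471803 : ℝ) < Real.log 2 := Real.log_two_gt_d9
  rcases le_or_gt ν 4 with h4 | h4
  · have h2ν : (2:ℝ) ^ (ν/2-1) ≤ ν ^ (ν/2-1) :=
      Real.rpow_le_rpow (by norm_num) (by linarith) hx.le
    have hexp : 1 + (ν/2-1) * Real.log 2 ≤ (2:ℝ) ^ (ν/2-1) := by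
      rw [Real.rpow_def_of_pos (by norm_num : (0:ℝ) < 2)]
      have := Real.add_one_le_exp (Real.log 2 * (ν/2-1))
      linarith [this, mul_comm (ν/2-1) (Real.log 2)]
    have hxle : ν/2 - 1 ≤ 1 := by linarith
    nlinarith [hexp, h2ν, hlog2, hx]
  · have hlogν : (1:ℝ) ≤ Real.log ν := by
      have h1 : Real.log 4 ≤ Real.log ν := Real.log_le_log (by norm_num) (by linarith)
      have h2 : Real.log 4 = 2 * Real.log 2 := by
        rw [show (4:ℝ) = 2^2 by norm_num, Real.log_pow]; push_cast; ring
      linarith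
    have hexp : 1 + (ν/2-1) * Real.log ν ≤ ν ^ (ν/2-1) := by
      rw [Real.rpow_def_of_pos (by linarith : (0:ℝ) < ν)]
      have := Real.add_one_le_exp (Real.log ν * (ν/2-1))
      linarith [this, mul_comm (ν/2-1) (Real.log ν)]
    nlinarith [hexp, hlogν, hx]

lemma total_lemma' {ν : ℝ} (hν : 0 < ν) (hν1 : 1 ≤ ν) :
    ∫ u, tPdf ν u = Real.sqrt (ν*Real.pi) * Real.Gamma (ν/2) / Real.Gamma ((ν+1)/2) := by
  have hint := tPdf_integrable hν1
  have hsym : ∫ u in Iic (0:ℝ), tPdf ν u = ∫ u in Ioi (0:ℝ), tPdf ν u := by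
    simpa using symm_lemma (ν := ν) 0
  have hsplit := intervalIntegral.integral_Iic_add_Ioi (μ := volume) (b := (0:ℝ))
    hint.integrableOn hint.integrableOn
  have hval := subst_lemma hν
  have hbeta := beta_eval (a := ν/2) (b := (1:ℝ)/2) (by linarith) (by norm_num)
  rw [← hsplit, hsym, hval, hbeta, show ν/2 + 1/2 = (ν+1)/2 by ring,
    Real.Gamma_one_half_eq, Real.sqrt_mul hν.le]
  ring

lemma alg2 {A B sp sn x : ℝ} (hB : B ≠ 0) (hsp : sp ≠ 0) (hsn : sn ≠ 0) :
    A / (sn * sp * B) * (x * sn) = A / B * x / sp := by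
  field_simp



/-- For every real `t`, both `1/(1 - F_ν(t))` and `1/F_ν(t)` are bounded by
`2 + (t² + ν)^{ν/2} / κ` where `κ = Γ((ν+1)/2)(ν−1)/(2√π Γ(ν/2))`. -/
theorem t_cdf_reciprocal_bounds (ν : ℝ) (hν : 2 < ν) (t : ℝ) :
    1 / (1 - tCDF ν t) ≤
      2 + (t ^ 2 + ν) ^ (ν / 2) /
        (Real.Gamma ((ν + 1) / 2) * (ν - 1) / (2 * Real.sqrt Real.pi * Real.Gamma (ν / 2))) ∧
    1 / tCDF ν t ≤
      2 + (t ^ 2 + ν) ^ (ν / 2) /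
        (Real.Gamma ((ν + 1) / 2) * (ν - 1) / (2 * Real.sqrt Real.pi * Real.Gamma (ν / 2))) := by
  have hν0 : (0:ℝ) < ν := by linarith
  have hν1 : (1:ℝ) ≤ ν := by linarith
  have hΓs : 0 < Real.Gamma ((ν+1)/2) := Real.Gamma_pos_of_pos (by linarith)
  have hΓν : 0 < Real.Gamma (ν/2) := Real.Gamma_pos_of_pos (by linarith)
  have hsπ : 0 < Real.sqrt (ν*Real.pi) := Real.sqrt_pos.mpr (by positivity)
  have hπ : 0 < Real.sqrt Real.pi := Real.sqrt_pos.mpr Real.pi_pos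
  set c := Real.Gamma ((ν+1)/2) / (Real.sqrt (ν*Real.pi) * Real.Gamma (ν/2)) with hc
  have hcpos : 0 < c := by rw [hc]; positivity
  set κ := Real.Gamma ((ν + 1) / 2) * (ν - 1) / (2 * Real.sqrt Real.pi * Real.Gamma (ν / 2))
    with hκdef
  have hκpos : 0 < κ := by
    rw [hκdef]
    exact div_pos (mul_pos hΓs (by linarith)) (by positivity)
  have hint := tPdf_integrable hν1
  have hFdef : ∀ r : ℝ, tCDF ν r = c * ∫ u in Iic r, tPdf ν u := by
    intro r
    rw [tCDF, ← hc]
    exact MeasureTheory.integral_const_mul c _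
  have htot : c * ∫ u, tPdf ν u = 1 := by
    rw [total_lemma' hν0 hν1, hc]
    field_simp
  have hsplit : ∀ r : ℝ, (∫ u in Iic r, tPdf ν u) + ∫ u in Ioi r, tPdf ν u = ∫ u, tPdf ν u :=
    fun r => intervalIntegral.integral_Iic_add_Ioi hint.integrableOn hint.integrableOn
  have hGdef : ∀ r : ℝ, 1 - tCDF ν r = c * ∫ u in Ioi r, tPdf ν u := by
    intro r
    rw [hFdef r]
    linear_combination (-1:ℝ)*htot - c*(hsplit r)
  have hκ' : κ ≤ c * ν ^ ((ν-1)/2) := by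
    have hp := pow_lemma hν
    have hν12 : (0:ℝ) < ν ^ ((1:ℝ)/2) := Real.rpow_pos_of_pos hν0 _
    have e1 : κ = (Real.Gamma ((ν+1)/2)/Real.Gamma (ν/2)) * ((ν-1)/2) / Real.sqrt Real.pi := by
      rw [hκdef]; ring
    have hsplitν : ν ^ ((ν-1)/2) = ν ^ (ν/2-1) * ν ^ ((1:ℝ)/2) := by
      rw [← Real.rpow_add hν0]; congr 1; ring
    have e2 : c * ν ^ ((ν-1)/2)
        = (Real.Gamma ((ν+1)/2)/Real.Gamma (ν/2)) * (ν ^ (ν/2-1)) / Real.sqrt Real.pi := by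
      rw [hc, Real.sqrt_mul hν0.le, Real.sqrt_eq_rpow ν, hsplitν]
      exact alg2 hΓν.ne' hπ.ne' hν12.ne'
    rw [e1, e2]
    gcongr
  set m : ℝ → ℝ := fun r => κ * (r^2+ν) ^ (-(ν/2)) with hm
  have hmpos : ∀ r : ℝ, 0 < m r := fun r =>
    mul_pos hκpos (Real.rpow_pos_of_pos (by positivity) _)
  have hclaim0 : ∀ r : ℝ, 0 ≤ r → m r ≤ c * ∫ u in Ioi r, tPdf ν u := by
    intro r hr
    have hbase : (0:ℝ) < r^2+ν := by positivity
    have h1 := tail_lemma hν0 hr hint.integrableOn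
    calc m r = κ * (r^2+ν) ^ (-(ν/2)) := by rw [hm]
      _ ≤ (c * ν ^ ((ν-1)/2)) * (r^2+ν) ^ (-(ν/2)) :=
          mul_le_mul_of_nonneg_right hκ' (Real.rpow_nonneg hbase.le _)
      _ = c * (ν ^ ((ν-1)/2) * (ν + r^2) ^ (-(ν/2))) := by rw [show ν+r^2 = r^2+ν by ring]; ring
      _ ≤ c * ∫ u in Ioi r, tPdf ν u := mul_le_mul_of_nonneg_left h1 hcpos.le
  have hclaim : ∀ r : ℝ, m r ≤ c * ∫ u in Ioi r, tPdf ν u := by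
    intro r
    rcases le_or_gt 0 r with hr | hr
    · exact hclaim0 r hr
    · have h0 : m r ≤ m 0 := by
        rw [hm]
        simp only [ne_eq]
        have : ((0:ℝ)^2+ν) = ν := by norm_num
        rw [this]
        exact mul_le_mul_of_nonneg_left
          (Real.rpow_le_rpow_of_nonpos hν0 (by nlinarith) (by linarith)) hκpos.le
      have h2 : (∫ u in Ioi (0:ℝ), tPdf ν u) ≤ ∫ u in Ioi r, tPdf ν u := by
        apply setIntegral_mono_set hint.integrableOn
        · filter_upwards with u
          exact (tPdf_pos hν0 u).le
        · exact HasSubset.Subset.eventuallyLE (Ioi_subset_Ioi hr.le)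
      exact (h0.trans (hclaim0 0 le_rfl)).trans (mul_le_mul_of_nonneg_left h2 hcpos.le)
  have hfinal : ∀ r : ℝ, m r ≤ c * (∫ u in Ioi r, tPdf ν u) →
      1 / (c * ∫ u in Ioi r, tPdf ν u) ≤ 2 + (r^2+ν) ^ (ν/2) / κ := by
    intro r hr
    have hbase : (0:ℝ) < r^2+ν := by positivity
    have h1 : 1 / (c * ∫ u in Ioi r, tPdf ν u) ≤ 1 / m r :=
      one_div_le_one_div_of_le (hmpos r) hr
    have h2 : 1 / m r = (r^2+ν) ^ (ν/2) / κ := by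
      rw [hm]
      simp only []
      rw [show -(ν/2) = -(ν/2) from rfl, Real.rpow_neg hbase.le]
      field_simp
    have h3 : (0:ℝ) < (r^2+ν) ^ (ν/2) / κ := by positivity
    linarith [h1, h2.le, h2.ge]
  constructor
  · rw [hGdef t]
    exact hfinal t (hclaim t)
  · have hsymF : tCDF ν t = c * ∫ u in Ioi (-t), tPdf ν u := by
      rw [hFdef t, symm_lemma]
    rw [hsymF]
    have := hfinal (-t) (hclaim (-t))
    rw [show (-t)^2 = t^2 by ring] at this
    exact this
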